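/- Let T > 0 and let w : ℝ × ℝ → ℝ be such that for each t ∈ [0,T) the function w(t,·) is differentiable, with spatial derivative w_x(t,x). Let m : ℝ × ℝ → ℝ be differentiable on [0,T) × ℝ, with partial derivatives m_t and m_x satisfying m_t(t,x) + w(t,x) m_x(t,x) + w_x(t,x) m(t,x) = 0 for all (t,x) ∈ [0,T) × ℝ. Let γ : [0,T) → ℝ be differentiable with γ'(t) = w(t,γ(t)), and assume s ↦ w_x(s,γ(s)) is continuous on [0,T). Then for every t ∈ [0,T): m(t,γ(t)) · exp(∫₀ᵗ w_x(s,γ(s)) ds) = m(0,γ(0)). In particular, m(t,γ(t)) is nonnegative (respectively zero, positive) if and only if m(0,γ(0)) is. -/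

import Mathlib

open MeasureTheory Set

/-- Conservation of `m` along characteristics: if `m` solves the transport
equation `m_t + w m_x + w_x m = 0` and `γ' = w(t, γ)`, then
`m(t,γ(t)) exp (∫₀ᵗ w_x(s,γ(s)) ds) = m(0,γ(0))`; in particular `m(t,γ(t))`
is nonnegative (resp. zero, positive) iff `m(0,γ(0))` is. -/
theorem transport_conservation_along_characteristics (T : ℝ) (hT : 0 < T)
    (w wx : ℝ → ℝ → ℝ)
    (hw : ∀ t ∈ Ico (0:ℝ) T, ∀ x : ℝ, HasDerivAt (w t) (wx t x) x)
    (m mt mx : ℝ → ℝ → ℝ)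
    (hm : ∀ t ∈ Ico (0:ℝ) T, ∀ x : ℝ,
      HasFDerivAt (fun p : ℝ × ℝ => m p.1 p.2)
        ((mt t x) • ContinuousLinearMap.fst ℝ ℝ ℝ
          + (mx t x) • ContinuousLinearMap.snd ℝ ℝ ℝ) (t, x))
    (heq : ∀ t ∈ Ico (0:ℝ) T, ∀ x : ℝ,
      mt t x + w t x * mx t x + wx t x * m t x = 0)
    (γ : ℝ → ℝ)
    (hγ : ∀ t ∈ Ico (0:ℝ) T, HasDerivAt γ (w t (γ t)) t)
    (hcont : ContinuousOn (fun s => wx s (γ s)) (Ico (0:ℝ) T)) :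
    ∀ t ∈ Ico (0:ℝ) T,
      m t (γ t) * Real.exp (∫ s in (0:ℝ)..t, wx s (γ s)) = m 0 (γ 0) ∧
      (0 ≤ m t (γ t) ↔ 0 ≤ m 0 (γ 0)) ∧
      (m t (γ t) = 0 ↔ m 0 (γ 0) = 0) ∧
      (0 < m t (γ t) ↔ 0 < m 0 (γ 0)) := by
  -- define f, the integrand along the characteristic
  set f : ℝ → ℝ := fun s => wx s (γ s) with hf
  -- derivative of `u ↦ m u (γ u)` at points of `Ico 0 T`
  have hM : ∀ u ∈ Ico (0:ℝ) T,
      HasDerivAt (fun u => m u (γ u)) (mt u (γ u) + mx u (γ u) * w u (γ u)) u := by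
    intro u hu
    have hc : HasDerivAt (fun u => ((u, γ u) : ℝ × ℝ)) (1, w u (γ u)) u :=
      (hasDerivAt_id u).prodMk (hγ u hu)
    have := (hm u hu (γ u)).comp_hasDerivAt u hc
    simpa [Function.comp_def] using this
  intro t ht
  obtain ⟨ht0, htT⟩ := ht
  have hsub : Icc (0:ℝ) t ⊆ Ico (0:ℝ) T := fun x hx => ⟨hx.1, lt_of_le_of_lt hx.2 htT⟩
  have hfc : ContinuousOn f (Icc (0:ℝ) t) := hcont.mono hsub
  have hint : ∀ x ∈ Icc (0:ℝ) t, IntervalIntegrable f volume 0 x := by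
    intro x hx
    exact (hfc.mono (fun y hy => ⟨hy.1, le_trans hy.2 hx.2⟩ : Icc (0:ℝ) x ⊆ Icc 0 t)).intervalIntegrable_of_Icc hx.1
  -- the conserved quantity
  set F : ℝ → ℝ := fun u => m u (γ u) * Real.exp (∫ s in (0:ℝ)..u, f s) with hF
  have hFc : ContinuousOn F (Icc (0:ℝ) t) := by
    apply ContinuousOn.mul
    · exact fun x hx => ((hM x (hsub hx)).continuousAt).continuousWithinAt
    · have h1 : ContinuousOn (fun u => ∫ s in (0:ℝ)..u, f s) (Icc (0:ℝ) t) := by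
        have := intervalIntegral.continuousOn_primitive_interval
          (a := (0:ℝ)) (b := t) (μ := volume) (f := f)
          (by rw [uIcc_of_le ht0]; exact hfc.integrableOn_Icc)
        rwa [uIcc_of_le ht0] at this
      exact Real.continuous_exp.comp_continuousOn h1
  have hFd : ∀ x ∈ Ico (0:ℝ) t, HasDerivWithinAt F 0 (Ici x) x := by
    intro x hx
    have hxT : x ∈ Ico (0:ℝ) T := ⟨hx.1, lt_trans hx.2 htT⟩
    have hIoi : Ico x T ∈ nhdsWithin x (Ioi x) := by
      apply mem_nhdsWithin.2
      exact ⟨Iio T, isOpen_Iio, hxT.2, fun y hy => ⟨le_of_lt hy.2, hy.1⟩⟩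
    have hcw : ContinuousWithinAt f (Ioi x) x := by
      refine (hcont.continuousWithinAt hxT).mono_of_mem_nhdsWithin ?_
      exact Filter.mem_of_superset hIoi (fun y hy => ⟨le_trans hxT.1 hy.1, hy.2⟩)
    have hmeas : StronglyMeasurableAtFilter f (nhdsWithin x (Ioi x)) volume :=
      ⟨Ico x T, hIoi, ((hcont.mono (fun y hy => ⟨le_trans hxT.1 hy.1, hy.2⟩)).aestronglyMeasurable
        measurableSet_Ico)⟩
    have hG : HasDerivWithinAt (fun u => ∫ s in (0:ℝ)..u, f s) (f x) (Ici x) x :=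
      intervalIntegral.integral_hasDerivWithinAt_right
        (hint x ⟨hx.1, le_of_lt hx.2⟩) hmeas hcw
    have hE : HasDerivWithinAt (fun u => Real.exp (∫ s in (0:ℝ)..u, f s))
        (f x * Real.exp (∫ s in (0:ℝ)..x, f s)) (Ici x) x := by
      simpa [mul_comm] using hG.exp
    have hd := ((hM x hxT).hasDerivWithinAt (s := Ici x)).mul hE
    have h0 := heq x hxT (γ x)
    have : (mt x (γ x) + mx x (γ x) * w x (γ x)) * Real.exp (∫ s in (0:ℝ)..x, f s)
        + m x (γ x) * (f x * Real.exp (∫ s in (0:ℝ)..x, f s)) = 0 := by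
      have : f x = wx x (γ x) := rfl
      rw [this]
      linear_combination Real.exp (∫ s in (0:ℝ)..x, f s) * h0
    rw [this] at hd
    exact hd
  have hconst := constant_of_has_deriv_right_zero hFc hFd t ⟨ht0, le_refl t⟩
  have hF0 : F 0 = m 0 (γ 0) := by simp [hF]
  have key : m t (γ t) * Real.exp (∫ s in (0:ℝ)..t, wx s (γ s)) = m 0 (γ 0) := by
    rw [← hF0]; exact hconst
  have hexp : 0 < Real.exp (∫ s in (0:ℝ)..t, wx s (γ s)) := Real.exp_pos _
  refine ⟨key, ?_, ?_, ?_⟩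
  · constructor
    · intro h; rw [← key]; positivity
    · intro h; nlinarith
  · constructor
    · intro h; rw [← key, h, zero_mul]
    · intro h; rw [h] at key
      rcases mul_eq_zero.1 key with h' | h'
      · exact h'
      · exact absurd h' (ne_of_gt hexp)
  · constructor
    · intro h; rw [← key]; positivity
    · intro h; nlinarith
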